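/- Let G be a bipartite graph with bipartition (A, B). Then there exists a subgraph G' of G with bipartition (A', B'), A' ⊆ A and B' ⊆ B, such that e(G') ≥ (1/2)·e(G), every vertex of A' has degree at least (1/4)·d_A(G) in G', and every vertex of B' has degree at least (1/4)·d_B(G) in G'. -/

import Mathlib

open Finset

namespace BMDS

variable {V : Type*} [Fintype V] [DecidableEq V] (G : SimpleGraph V) [DecidableRel G.Adj]

def EF (S : Finset V) : Finset (Sym2 V) :=
  G.edgeFinset.filter (fun x => ∀ v ∈ x, v ∈ S)

lemma EF_univ : EF G Finset.univ = G.edgeFinset := by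
  simp [EF]

lemma EF_card_erase {S : Finset V} {v : V} (hv : v ∈ S) :
    (EF G S).card = (EF G (S.erase v)).card + (S.filter (G.Adj v)).card := by
  have h1 : EF G (S.erase v) = (EF G S).filter (fun x => v ∉ x) := by
    ext x
    simp only [EF, Finset.mem_filter, Finset.mem_erase]
    constructor
    · rintro ⟨hx, h⟩
      exact ⟨⟨hx, fun w hw => (h w hw).2⟩, fun hvx => (h v hvx).1 rfl⟩
    · rintro ⟨⟨hx, h⟩, hvx⟩
      exact ⟨hx, fun w hw => ⟨fun hwv => hvx (hwv ▸ hw), h w hw⟩⟩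
  have h2 : (EF G S).filter (fun x => v ∈ x) =
      (S.filter (G.Adj v)).image (fun w => s(v, w)) := by
    ext x
    simp only [EF, Finset.mem_filter, Finset.mem_image, SimpleGraph.mem_edgeFinset]
    constructor
    · rintro ⟨⟨hx, h⟩, hvx⟩
      obtain ⟨w, rfl⟩ := Sym2.mem_iff_exists.mp hvx
      refine ⟨w, ⟨h w (Sym2.mem_mk_right v w), (G.mem_edgeSet).mp hx⟩, rfl⟩
    · rintro ⟨w, ⟨hwS, hadj⟩, rfl⟩
      refine ⟨⟨(G.mem_edgeSet).mpr hadj, ?_⟩, Sym2.mem_mk_left v w⟩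
      intro u hu
      rcases Sym2.mem_iff.mp hu with h | h
      · exact h ▸ hv
      · exact h ▸ hwS
  have h3 : ((S.filter (G.Adj v)).image (fun w => s(v, w))).card =
      (S.filter (G.Adj v)).card := by
    apply Finset.card_image_of_injOn
    intro a _ b _ hab
    exact (Sym2.congr_right).mp hab
  have h4 := Finset.card_filter_add_card_filter_not
    (s := EF G S) (p := fun x => v ∈ x)
  rw [h1, ← h3, ← h2]
  omega

def indSub (S : Finset V) : G.Subgraph where
  verts := ↑S
  Adj u w := G.Adj u w ∧ u ∈ S ∧ w ∈ S
  adj_sub h := h.1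
  edge_vert h := h.2.1
  symm := ⟨fun u w h => ⟨h.1.symm, h.2.2, h.2.1⟩⟩

lemma indSub_edgeSet (S : Finset V) : (indSub G S).edgeSet = ↑(EF G S) := by
  ext x
  induction x using Sym2.ind with
  | _ u w =>
    simp only [SimpleGraph.Subgraph.mem_edgeSet, indSub, Finset.coe_filter, EF,
      Set.mem_setOf_eq, Finset.coe_sort_coe, Finset.mem_coe, Finset.mem_filter,
      SimpleGraph.mem_edgeFinset, SimpleGraph.mem_edgeSet]
    constructor
    · rintro ⟨hadj, hu, hw⟩
      refine ⟨hadj, fun v hv => ?_⟩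
      rcases Sym2.mem_iff.mp hv with h | h
      · exact h ▸ hu
      · exact h ▸ hw
    · rintro ⟨hadj, h⟩
      exact ⟨hadj, h u (Sym2.mem_mk_left u w), h w (Sym2.mem_mk_right u w)⟩

lemma indSub_neighborSet {S : Finset V} {a : V} (ha : a ∈ S) :
    (indSub G S).neighborSet a = ↑(S.filter (G.Adj a)) := by
  ext w
  simp only [SimpleGraph.Subgraph.mem_neighborSet, indSub, Finset.coe_filter,
    Set.mem_setOf_eq, Finset.mem_coe, Finset.mem_filter]
  tauto

end BMDS

open BMDS in

/-- **Min-degree cleaning lemma for bipartite graphs.** Every bipartite graph `G` with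
bipartition `(A, B)` has a subgraph `G'` with bipartition `(A', B')`, `A' ⊆ A`, `B' ⊆ B`,
with at least half of the edges, in which every vertex of `A'` has degree at least
`d_A(G)/4 = e(G)/(4|A|)` and every vertex of `B'` has degree at least `d_B(G)/4 = e(G)/(4|B|)`. -/
theorem bipartite_min_degree_subgraph {V : Type*} [Fintype V] [DecidableEq V]
    (G : SimpleGraph V) (A B : Finset V)
    (hdisj : Disjoint A B) (hcover : A ∪ B = Finset.univ)
    (hbip : ∀ u w : V, G.Adj u w → (u ∈ A ∧ w ∈ B) ∨ (u ∈ B ∧ w ∈ A)) :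
    ∃ (A' B' : Finset V) (G' : G.Subgraph),
      A' ⊆ A ∧ B' ⊆ B ∧ G'.verts = ↑(A' ∪ B') ∧
      (G.edgeSet.ncard : ℝ) / 2 ≤ (G'.edgeSet.ncard : ℝ) ∧
      (∀ a ∈ A', (1 / 4 : ℝ) * ((G.edgeSet.ncard : ℝ) / (A.card : ℝ)) ≤
        ((G'.neighborSet a).ncard : ℝ)) ∧
      (∀ b ∈ B', (1 / 4 : ℝ) * ((G.edgeSet.ncard : ℝ) / (B.card : ℝ)) ≤
        ((G'.neighborSet b).ncard : ℝ)) := by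
  classical
  have hE : (G.edgeSet.ncard : ℝ) = (G.edgeFinset.card : ℝ) := by
    rw [← SimpleGraph.coe_edgeFinset, Set.ncard_coe_finset]
  set E : ℝ := (G.edgeFinset.card : ℝ) with hEdef
  have hE0 : (0:ℝ) ≤ E := Nat.cast_nonneg _
  set cA : ℝ := (1/4) * (E / (A.card : ℝ)) with hcAdef
  set cB : ℝ := (1/4) * (E / (B.card : ℝ)) with hcBdef
  have hcA0 : (0:ℝ) ≤ cA :=
    mul_nonneg (by norm_num) (div_nonneg hE0 (Nat.cast_nonneg _))
  have hcB0 : (0:ℝ) ≤ cB :=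
    mul_nonneg (by norm_num) (div_nonneg hE0 (Nat.cast_nonneg _))
  set f : Finset V → ℝ := fun S =>
    ((EF G S).card : ℝ) - cA * ((S ∩ A).card : ℝ) - cB * ((S ∩ B).card : ℝ) with hf
  obtain ⟨S, -, hS⟩ := Finset.exists_max_image Finset.univ f ⟨∅, Finset.mem_univ ∅⟩
  have hSmax : ∀ T : Finset V, f T ≤ f S := fun T => hS T (Finset.mem_univ T)
  have hA4 : cA * (A.card : ℝ) ≤ E / 4 := by
    rcases eq_or_ne (A.card : ℝ) 0 with h | h
    · rw [h, mul_zero]; linarith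
    · have hc := div_mul_cancel₀ E h
      calc cA * (A.card : ℝ) = 1/4 * (E / (A.card : ℝ) * (A.card : ℝ)) := by
            rw [hcAdef]; ring
        _ = 1/4 * E := by rw [hc]
        _ = E / 4 := by ring
        _ ≤ E / 4 := le_refl _
  have hB4 : cB * (B.card : ℝ) ≤ E / 4 := by
    rcases eq_or_ne (B.card : ℝ) 0 with h | h
    · rw [h, mul_zero]; linarith
    · have hc := div_mul_cancel₀ E h
      calc cB * (B.card : ℝ) = 1/4 * (E / (B.card : ℝ) * (B.card : ℝ)) := by
            rw [hcBdef]; ring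
        _ = 1/4 * E := by rw [hc]
        _ = E / 4 := by ring
        _ ≤ E / 4 := le_refl _
  have hedge : E / 2 ≤ ((EF G S).card : ℝ) := by
    have h1 : f Finset.univ ≤ f S := hSmax _
    have h2 : f Finset.univ = E - cA * (A.card : ℝ) - cB * (B.card : ℝ) := by
      rw [hf]; dsimp only; rw [EF_univ, Finset.univ_inter, Finset.univ_inter]
    have h3 : (0:ℝ) ≤ cA * ((S ∩ A).card : ℝ) :=
      mul_nonneg hcA0 (Nat.cast_nonneg _)
    have h4 : (0:ℝ) ≤ cB * ((S ∩ B).card : ℝ) :=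
      mul_nonneg hcB0 (Nat.cast_nonneg _)
    have h5 : f S ≤ ((EF G S).card : ℝ) := by rw [hf]; dsimp only; linarith
    linarith
  refine ⟨S ∩ A, S ∩ B, indSub G S, Finset.inter_subset_right,
    Finset.inter_subset_right, ?_, ?_, ?_, ?_⟩
  · show (↑S : Set V) = ↑((S ∩ A) ∪ (S ∩ B))
    rw [← Finset.inter_union_distrib_left, hcover, Finset.inter_univ]
  · rw [hE]
    have : ((indSub G S).edgeSet.ncard : ℝ) = ((EF G S).card : ℝ) := by
      rw [indSub_edgeSet, Set.ncard_coe_finset]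
    rw [this]; exact hedge
  · intro a ha
    have haS : a ∈ S := (Finset.mem_inter.mp ha).1
    have haA : a ∈ A := (Finset.mem_inter.mp ha).2
    have hnb : (((indSub G S).neighborSet a).ncard : ℝ) =
        ((S.filter (G.Adj a)).card : ℝ) := by
      rw [indSub_neighborSet G haS, Set.ncard_coe_finset]
    rw [hE, hnb]
    have key := hSmax (S.erase a)
    have hcard := EF_card_erase G haS
    have h1 : (S.erase a ∩ A) = (S ∩ A).erase a := by
      ext w; simp only [Finset.mem_inter, Finset.mem_erase]; tauto
    have h2 : (S.erase a ∩ B) = S ∩ B := by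
      ext w
      simp only [Finset.mem_inter, Finset.mem_erase]
      constructor
      · tauto
      · rintro ⟨hwS, hwB⟩
        exact ⟨⟨fun h => (Finset.disjoint_left.mp hdisj haA) (h ▸ hwB), hwS⟩, hwB⟩
    have h3 : (((S ∩ A).erase a).card : ℝ) = ((S ∩ A).card : ℝ) - 1 :=
      Finset.cast_card_erase_of_mem ha
    have h4 : ((EF G (S.erase a)).card : ℝ) =
        ((EF G S).card : ℝ) - ((S.filter (G.Adj a)).card : ℝ) := by
      rw [hcard]; push_cast; ring
    rw [hf] at key
    dsimp only at key
    rw [h1, h2, h3, h4] at key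
    have : cA ≤ ((S.filter (G.Adj a)).card : ℝ) := by linarith
    exact this
  · intro b hb
    have hbS : b ∈ S := (Finset.mem_inter.mp hb).1
    have hbB : b ∈ B := (Finset.mem_inter.mp hb).2
    have hnb : (((indSub G S).neighborSet b).ncard : ℝ) =
        ((S.filter (G.Adj b)).card : ℝ) := by
      rw [indSub_neighborSet G hbS, Set.ncard_coe_finset]
    rw [hE, hnb]
    have key := hSmax (S.erase b)
    have hcard := EF_card_erase G hbS
    have h1 : (S.erase b ∩ B) = (S ∩ B).erase b := by
      ext w; simp only [Finset.mem_inter, Finset.mem_erase]; tauto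
    have h2 : (S.erase b ∩ A) = S ∩ A := by
      ext w
      simp only [Finset.mem_inter, Finset.mem_erase]
      constructor
      · tauto
      · rintro ⟨hwS, hwA⟩
        exact ⟨⟨fun h => (Finset.disjoint_right.mp hdisj hbB) (h ▸ hwA), hwS⟩, hwA⟩
    have h3 : (((S ∩ B).erase b).card : ℝ) = ((S ∩ B).card : ℝ) - 1 :=
      Finset.cast_card_erase_of_mem hb
    have h4 : ((EF G (S.erase b)).card : ℝ) =
        ((EF G S).card : ℝ) - ((S.filter (G.Adj b)).card : ℝ) := by
      rw [hcard]; push_cast; ring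
    rw [hf] at key
    dsimp only at key
    rw [h1, h2, h3, h4] at key
    have : cB ≤ ((S.filter (G.Adj b)).card : ℝ) := by linarith
    exact this
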